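/- For every bounded self-adjoint operator T on a complex Hilbert space H, the maximal deviation ‖T‖_v equals half the diameter of the spectrum of T. -/

import Mathlib

open scoped InnerProductSpace

variable {H : Type*} [NormedAddCommGroup H] [InnerProductSpace ℂ H] [CompleteSpace H]

/-- Variance of a bounded observable `T` at a vector `φ`. -/
noncomputable def observableVar (T : H →L[ℂ] H) (φ : H) : ℝ :=
  (⟪T (T φ), φ⟫_ℂ).re - ((⟪T φ, φ⟫_ℂ).re) ^ 2

/-- Maximal deviation of a bounded observable `T`. -/
noncomputable def maxDev (T : H →L[ℂ] H) : ℝ :=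
  ⨆ φ : {x : H // ‖x‖ = 1}, Real.sqrt (observableVar T φ)

section Aux

lemma inner_T_symm' {T : H →L[ℂ] H} (hT : IsSelfAdjoint T) (x y : H) :
    ⟪T x, y⟫_ℂ = ⟪x, T y⟫_ℂ := by
  conv_lhs => rw [← hT.adjoint_eq]
  exact ContinuousLinearMap.adjoint_inner_left T y x

lemma var_eq' {T : H →L[ℂ] H} (hT : IsSelfAdjoint T) (c : ℝ) {φ : H} (hφ : ‖φ‖ = 1) :
    observableVar T φ = ‖T φ - (c : ℂ) • φ‖ ^ 2 - ((⟪T φ, φ⟫_ℂ).re - c) ^ 2 := by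
  have h1 : (⟪T (T φ), φ⟫_ℂ).re = ‖T φ‖ ^ 2 := by
    rw [inner_T_symm' hT, ← @inner_self_eq_norm_sq ℂ]; rfl
  have h2 : ‖T φ - (c : ℂ) • φ‖ ^ 2
      = ‖T φ‖ ^ 2 - 2 * ((⟪T φ, (c : ℂ) • φ⟫_ℂ).re) + ‖(c : ℂ) • φ‖ ^ 2 :=
    @norm_sub_sq ℂ _ _ _ _ _ _
  have h3 : (⟪T φ, (c : ℂ) • φ⟫_ℂ).re = c * (⟪T φ, φ⟫_ℂ).re := by
    rw [inner_smul_right]; simp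
  have h4 : ‖(c : ℂ) • φ‖ ^ 2 = c ^ 2 := by
    rw [norm_smul, hφ]; simp [sq_abs]
  rw [observableVar, h1, h2, h3, h4]; ring

lemma approx_eig' {T : H →L[ℂ] H} (hT : IsSelfAdjoint T) {μ ε : ℝ}
    (hε : 0 < ε) (hμ : μ ∈ spectrum ℝ T) (f : ℝ → ℝ) (hf : Continuous f) (hfμ : f μ = 1)
    (hf1 : ∀ x, |f x| ≤ 1) (hsupp : ∀ x, ε ≤ |x - μ| → f x = 0) :
    ∃ u ∈ Set.range ⇑(cfc f T), ‖u‖ = 1 ∧ ‖T u - (μ : ℂ) • u‖ ≤ 2 * ε := by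
  set P := cfc f T with hP
  have hnP : (1 : ℝ) ≤ ‖P‖ := by
    have := norm_apply_le_norm_cfc f T hμ
    rwa [hfμ, norm_one] at this
  have hex : ∃ v : H, (1/2) * ‖v‖ < ‖P v‖ := by
    by_contra hcon
    push_neg at hcon
    have : ‖P‖ ≤ 1/2 := P.opNorm_le_bound (by norm_num) fun v => hcon v
    linarith
  obtain ⟨v, hv⟩ := hex
  have hPv : 0 < ‖P v‖ := lt_of_le_of_lt (by positivity) hv
  have hvPv : ‖v‖ ≤ 2 * ‖P v‖ := by linarith
  refine ⟨((‖P v‖ : ℂ))⁻¹ • P v, ⟨((‖P v‖ : ℂ))⁻¹ • v, by rw [ContinuousLinearMap.map_smul]⟩, ?_, ?_⟩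
  · rw [norm_smul]
    simp [hPv.ne']
  · have hkey : T (P v) - (μ : ℂ) • (P v) = cfc (fun x => (x - μ) * f x) T v := by
      have : cfc (fun x => (x - μ) * f x) T = (T - algebraMap ℝ (H →L[ℂ] H) μ) * P := by
        rw [cfc_mul _ _ T (by fun_prop) hf.continuousOn]
        congr 1
        rw [cfc_sub _ _ T (by fun_prop) (by fun_prop), cfc_id' ℝ T, cfc_const μ T]
      rw [this]
      simp only [ContinuousLinearMap.mul_apply, ContinuousLinearMap.sub_apply]
      congr 1
    have hnorm : ‖cfc (fun x => (x - μ) * f x) T‖ ≤ ε := by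
      apply norm_cfc_le hε.le
      intro x hx
      rcases le_or_gt ε |x - μ| with h | h
      · simp [hsupp x h, hε.le]
      · have h1 : |f x| ≤ 1 := hf1 x
        calc ‖(x - μ) * f x‖ = |x - μ| * |f x| := by rw [norm_mul]; rfl
          _ ≤ ε * 1 := mul_le_mul h.le h1 (abs_nonneg _) hε.le
          _ = ε := mul_one ε
    have : T (((‖P v‖ : ℂ))⁻¹ • P v) - (μ : ℂ) • (((‖P v‖ : ℂ))⁻¹ • P v)
        = ((‖P v‖ : ℂ))⁻¹ • (T (P v) - (μ : ℂ) • P v) := by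
      rw [ContinuousLinearMap.map_smul, smul_sub, smul_comm]
    rw [this, hkey, norm_smul]
    have h2 : ‖cfc (fun x => (x - μ) * f x) T v‖ ≤ ε * ‖v‖ :=
      (cfc (fun x => (x - μ) * f x) T).le_of_opNorm_le hnorm v
    have h3 : ‖((‖P v‖:ℂ))⁻¹‖ = ‖P v‖⁻¹ := by simp
    rw [h3]
    calc ‖P v‖⁻¹ * ‖cfc (fun x => (x - μ) * f x) T v‖ ≤ ‖P v‖⁻¹ * (ε * ‖v‖) :=
          mul_le_mul_of_nonneg_left h2 (by positivity)
      _ ≤ ‖P v‖⁻¹ * (ε * (2 * ‖P v‖)) :=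
          mul_le_mul_of_nonneg_left (mul_le_mul_of_nonneg_left hvPv hε.le) (by positivity)
      _ = 2 * ε := by field_simp

lemma var_lower' {T : H →L[ℂ] H} (hT : IsSelfAdjoint T) {M m ε : ℝ} (hε : 0 < ε)
    {u w : H} (hu : ‖u‖ = 1) (hw : ‖w‖ = 1) (huw : ⟪u, w⟫_ℂ = 0)
    (hTu : ‖T u - (M : ℂ) • u‖ ≤ 2 * ε) (hTw : ‖T w - (m : ℂ) • w‖ ≤ 2 * ε)
    (hd : 8 * ε ≤ (M - m) / 2) :
    ∃ χ : H, ‖χ‖ = 1 ∧ (M - m) / 2 - 8 * ε ≤ Real.sqrt (observableVar T χ) := by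
  set c : ℝ := (M + m) / 2 with hc
  set d : ℝ := (M - m) / 2 with hdd
  have hd0 : 0 < d := lt_of_lt_of_le (by positivity) hd
  set s : ℝ := Real.sqrt 2 with hs
  have hs0 : 0 < s := Real.sqrt_pos.mpr (by norm_num)
  have hs2 : s ^ 2 = 2 := Real.sq_sqrt (by norm_num)
  have hs1 : 1 ≤ s := by nlinarith
  have hwu : ⟪w, u⟫_ℂ = 0 := by rw [← inner_conj_symm, huw, map_zero]
  have huu : ⟪u, u⟫_ℂ = 1 := by
    rw [@inner_self_eq_norm_sq_to_K ℂ, hu]; norm_num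
  have hww : ⟪w, w⟫_ℂ = 1 := by
    rw [@inner_self_eq_norm_sq_to_K ℂ, hw]; norm_num
  have hre : (⟪u, w⟫_ℂ).re = 0 := by rw [huw]; simp
  have hadd : ‖u + w‖ = s := by
    have h : ‖u + w‖ ^ 2 = 2 := by
      rw [@norm_add_sq ℂ _ _ _ _ u w, hu, hw]
      simp [hre]; norm_num
    rw [← Real.sqrt_sq (norm_nonneg (u + w)), h]
  have hsub : ‖u - w‖ = s := by
    have h : ‖u - w‖ ^ 2 = 2 := by
      rw [@norm_sub_sq ℂ _ _ _ _ u w, hu, hw]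
      simp [hre]; norm_num
    rw [← Real.sqrt_sq (norm_nonneg (u - w)), h]
  set χ : H := ((s : ℂ))⁻¹ • (u + w) with hχdef
  have hsC : ‖((s : ℂ))⁻¹‖ = s⁻¹ := by
    simp [abs_of_pos hs0]
  have hχ : ‖χ‖ = 1 := by
    rw [hχdef, norm_smul, hsC, hadd, inv_mul_cancel₀ hs0.ne']
  set z : H := ((s : ℂ))⁻¹ • ((d : ℂ) • (u - w)) with hzdef
  have hMc : (M : ℂ) = (c : ℂ) + (d : ℂ) := by
    rw [hc, hdd]; push_cast; ring
  have hmc : (m : ℂ) = (c : ℂ) - (d : ℂ) := by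
    rw [hc, hdd]; push_cast; ring
  have key1 : T χ - (c : ℂ) • χ
      = z + ((s : ℂ))⁻¹ • ((T u - (M : ℂ) • u) + (T w - (m : ℂ) • w)) := by
    rw [hχdef, hzdef, ContinuousLinearMap.map_smul, map_add]
    rw [hMc, hmc]
    module
  have hz : ‖z‖ = d := by
    rw [hzdef, norm_smul, hsC, norm_smul, hsub]
    simp [Complex.norm_real, abs_of_pos hd0]
    field_simp
  have hzχ : ⟪z, χ⟫_ℂ = 0 := by
    rw [hzdef, hχdef]
    simp only [inner_smul_left, inner_smul_right, inner_sub_left, inner_add_right,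
      huw, hwu, huu, hww]
    ring
  have herr : ‖T χ - (c : ℂ) • χ - z‖ ≤ 4 * ε := by
    rw [key1]
    have : z + ((s : ℂ))⁻¹ • ((T u - (M : ℂ) • u) + (T w - (m : ℂ) • w)) - z
        = ((s : ℂ))⁻¹ • ((T u - (M : ℂ) • u) + (T w - (m : ℂ) • w)) := by abel
    rw [this, norm_smul, hsC]
    have h1 : ‖(T u - (M : ℂ) • u) + (T w - (m : ℂ) • w)‖ ≤ 4 * ε :=
      le_trans (norm_add_le _ _) (by linarith)
    have h2 : s⁻¹ ≤ 1 := by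
      rw [inv_le_one_iff₀]; right; exact hs1
    calc s⁻¹ * ‖(T u - (M : ℂ) • u) + (T w - (m : ℂ) • w)‖
        ≤ 1 * (4 * ε) := mul_le_mul h2 h1 (norm_nonneg _) zero_le_one
      _ = 4 * ε := one_mul _
  have hlow : d - 4 * ε ≤ ‖T χ - (c : ℂ) • χ‖ := by
    have h3 : ‖T χ - (c : ℂ) • χ‖ - d ≥ -(4 * ε) := by
      have h4 := abs_norm_sub_norm_le (T χ - (c : ℂ) • χ) z
      rw [hz] at h4
      have h5 := abs_le.mp (le_trans h4 herr)
      linarith [h5.1]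
    linarith
  have hrec : |(⟪T χ, χ⟫_ℂ).re - c| ≤ 4 * ε := by
    have hid : ((⟪T χ - (c : ℂ) • χ - z, χ⟫_ℂ)).re = (⟪T χ, χ⟫_ℂ).re - c := by
      rw [inner_sub_left, inner_sub_left, inner_smul_left, hzχ]
      have hχχ : ⟪χ, χ⟫_ℂ = 1 := by
        rw [@inner_self_eq_norm_sq_to_K ℂ, hχ]; norm_num
      rw [hχχ]
      simp
    rw [← hid]
    calc |(⟪T χ - (c : ℂ) • χ - z, χ⟫_ℂ).re| ≤ ‖⟪T χ - (c : ℂ) • χ - z, χ⟫_ℂ‖ :=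
          Complex.abs_re_le_norm _
      _ ≤ ‖T χ - (c : ℂ) • χ - z‖ * ‖χ‖ := norm_inner_le_norm _ _
      _ ≤ 4 * ε := by rw [hχ, mul_one]; exact herr
  have hvar : (d - 4 * ε) ^ 2 - (4 * ε) ^ 2 ≤ observableVar T χ := by
    rw [var_eq' hT c hχ]
    have h1 : (d - 4 * ε) ^ 2 ≤ ‖T χ - (c : ℂ) • χ‖ ^ 2 := by
      apply sq_le_sq' <;> nlinarith [norm_nonneg (T χ - (c : ℂ) • χ)]
    have h2 : ((⟪T χ, χ⟫_ℂ).re - c) ^ 2 ≤ (4 * ε) ^ 2 := by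
      rw [← sq_abs]
      exact pow_le_pow_left₀ (abs_nonneg _) hrec 2
    linarith
  refine ⟨χ, hχ, ?_⟩
  have hvar0 : (d - 8 * ε) ^ 2 ≤ observableVar T χ := by nlinarith
  exact le_trans (le_abs_self _)
    (by rw [← Real.sqrt_sq_eq_abs]; exact Real.sqrt_le_sqrt hvar0)

noncomputable def bumpFn (ε μ : ℝ) : ℝ → ℝ := fun x => max 0 (1 - |x - μ| / ε)

lemma bumpFn_cont (ε μ : ℝ) : Continuous (bumpFn ε μ) := by
  unfold bumpFn; fun_prop

lemma bumpFn_self (ε μ : ℝ) : bumpFn ε μ μ = 1 := by simp [bumpFn]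

lemma bumpFn_abs_le {ε : ℝ} (hε : 0 < ε) (μ x : ℝ) : |bumpFn ε μ x| ≤ 1 := by
  rw [abs_le]; constructor
  · exact le_trans (by norm_num) (le_max_left _ _)
  · apply max_le (by norm_num)
    have : 0 ≤ |x - μ| / ε := by positivity
    linarith

lemma bumpFn_zero {ε μ : ℝ} (hε : 0 < ε) {x : ℝ} (h : ε ≤ |x - μ|) : bumpFn ε μ x = 0 := by
  apply max_eq_left
  have : 1 ≤ |x - μ| / ε := (one_le_div hε).mpr h
  linarith

lemma bumpFn_ne_zero {ε μ x : ℝ} (hε : 0 < ε) (h : bumpFn ε μ x ≠ 0) : |x - μ| < ε := by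
  by_contra hc
  push_neg at hc
  exact h (bumpFn_zero hε hc)

end Aux

theorem maxDev_eq_half_diam_spectrum (T : H →L[ℂ] H) (hT : IsSelfAdjoint T) :
    maxDev T = Metric.diam (spectrum ℂ T) / 2 := by
  rcases subsingleton_or_nontrivial H with hH | hH
  · -- trivial Hilbert space
    have hempty : IsEmpty {x : H // ‖x‖ = 1} := by
      refine ⟨fun φ => ?_⟩
      obtain ⟨x, hx⟩ := φ
      rw [Subsingleton.elim x 0, norm_zero] at hx
      exact zero_ne_one hx
    have hmd : maxDev T = 0 := by
      rw [maxDev, Real.iSup_of_isEmpty]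
    have hsub : Subsingleton (H →L[ℂ] H) :=
      ⟨fun f g => ContinuousLinearMap.ext fun x => Subsingleton.elim _ _⟩
    have hspec : spectrum ℂ T = ∅ :=
      Set.eq_empty_iff_forall_notMem.mpr fun z hz =>
        (spectrum.mem_iff.mp hz) (isUnit_of_subsingleton _)
    rw [hmd, hspec, Metric.diam_empty]
    norm_num
  · -- nontrivial case
    have hScne : (spectrum ℂ T).Nonempty := spectrum.nonempty T
    have hScc : IsCompact (spectrum ℂ T) := spectrum.isCompact T
    have him : ⇑Complex.reCLM '' spectrum ℂ T = spectrum ℝ T := hT.spectrumRestricts.image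
    have hSne : (spectrum ℝ T).Nonempty := him ▸ hScne.image _
    have hSc : IsCompact (spectrum ℝ T) := him ▸ hScc.image Complex.reCLM.continuous
    have hSb : Bornology.IsBounded (spectrum ℝ T) := hSc.isBounded
    set m : ℝ := sInf (spectrum ℝ T) with hm
    set M : ℝ := sSup (spectrum ℝ T) with hM
    have hmS : m ∈ spectrum ℝ T := hSc.sInf_mem hSne
    have hMS : M ∈ spectrum ℝ T := hSc.sSup_mem hSne
    have hmM : m ≤ M := csInf_le_csSup hSne hSb.bddBelow hSb.bddAbove
    have hdiam : Metric.diam (spectrum ℂ T) = M - m := by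
      rw [← hT.spectrumRestricts.algebraMap_image]
      have h1 : Metric.diam (algebraMap ℝ ℂ '' spectrum ℝ T) = Metric.diam (spectrum ℝ T) :=
        Complex.isometry_ofReal.diam_image (spectrum ℝ T)
      rw [h1, Real.diam_eq hSb]
    set c : ℝ := (M + m) / 2 with hc
    set d : ℝ := (M - m) / 2 with hd
    have hd0 : 0 ≤ d := by rw [hd]; linarith
    -- upper bound for each unit vector
    have hub1 : ∀ φ : {x : H // ‖x‖ = 1}, Real.sqrt (observableVar T φ) ≤ d := by
      rintro ⟨φ, hφ⟩
      have hcfc : cfc (fun x : ℝ => x - c) T = T - algebraMap ℝ (H →L[ℂ] H) c := by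
        rw [cfc_sub _ _ T (by fun_prop) (by fun_prop), cfc_id' ℝ T, cfc_const c T]
      have hnA : ‖cfc (fun x : ℝ => x - c) T‖ ≤ d := by
        apply norm_cfc_le hd0
        intro x hx
        have hx1 : m ≤ x := csInf_le hSb.bddBelow hx
        have hx2 : x ≤ M := le_csSup hSb.bddAbove hx
        rw [Real.norm_eq_abs, abs_le]
        constructor <;> [skip; skip] <;> rw [hc, hd] at * <;> linarith
      have happ : T φ - (c : ℂ) • φ = (cfc (fun x : ℝ => x - c) T) φ := by
        rw [hcfc]
        simp only [ContinuousLinearMap.sub_apply]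
        congr 1
      have hnφ : ‖T φ - (c : ℂ) • φ‖ ≤ d := by
        rw [happ]
        calc ‖(cfc (fun x : ℝ => x - c) T) φ‖ ≤ ‖cfc (fun x : ℝ => x - c) T‖ * ‖φ‖ :=
              (cfc (fun x : ℝ => x - c) T).le_opNorm φ
          _ ≤ d := by rw [hφ, mul_one]; exact hnA
      have hv : observableVar T φ ≤ d ^ 2 := by
        rw [var_eq' hT c hφ]
        nlinarith [sq_nonneg ((⟪T φ, φ⟫_ℂ).re - c), norm_nonneg (T φ - (c : ℂ) • φ)]
      calc Real.sqrt (observableVar T φ) ≤ Real.sqrt (d ^ 2) := Real.sqrt_le_sqrt hv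
        _ = d := Real.sqrt_sq hd0
    have hne : Nonempty {x : H // ‖x‖ = 1} := by
      obtain ⟨x, hx⟩ := NormedSpace.sphere_nonempty (E := H) (x := 0) (r := 1) |>.mpr zero_le_one
      exact ⟨⟨x, by simpa using mem_sphere_zero_iff_norm.mp hx⟩⟩
    have hbdd : BddAbove (Set.range fun φ : {x : H // ‖x‖ = 1} =>
        Real.sqrt (observableVar T φ)) := by
      refine ⟨d, ?_⟩
      rintro y ⟨φ, rfl⟩
      exact hub1 φ
    have hub : maxDev T ≤ d := ciSup_le hub1
    -- lower bound
    have hlb : d ≤ maxDev T := by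
      obtain ⟨φ₀⟩ := hne
      have h0 : 0 ≤ maxDev T :=
        le_trans (Real.sqrt_nonneg _) (le_ciSup hbdd φ₀)
      rcases eq_or_lt_of_le hmM with he | hlt
      · rw [hd, ← he]; simpa using h0
      · have hdpos : 0 < d := by rw [hd]; linarith
        apply le_of_forall_pos_le_add
        intro η hη
        set ε : ℝ := min (d / 8) (η / 8) with hε
        have hε0 : 0 < ε := lt_min (by positivity) (by positivity)
        have hε1 : 8 * ε ≤ d := by
          have := min_le_left (d / 8) (η / 8)
          rw [hε]; linarith [min_le_left (d / 8) (η / 8)]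
        have hε2 : 8 * ε ≤ η := by
          linarith [min_le_right (d / 8) (η / 8)]
        -- approximate eigenvectors
        obtain ⟨u, ⟨a, ha⟩, hu1, hTu⟩ := approx_eig' hT hε0 hMS (bumpFn ε M)
          (bumpFn_cont ε M) (bumpFn_self ε M) (bumpFn_abs_le hε0 M)
          (fun x hx => bumpFn_zero hε0 hx)
        obtain ⟨w, ⟨b, hb⟩, hw1, hTw⟩ := approx_eig' hT hε0 hmS (bumpFn ε m)
          (bumpFn_cont ε m) (bumpFn_self ε m) (bumpFn_abs_le hε0 m)
          (fun x hx => bumpFn_zero hε0 hx)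
        -- orthogonality
        have hprod : ∀ x : ℝ, bumpFn ε M x * bumpFn ε m x = 0 := by
          intro x
          by_contra hcon
          have h1 : bumpFn ε M x ≠ 0 := fun h => hcon (by rw [h, zero_mul])
          have h2 : bumpFn ε m x ≠ 0 := fun h => hcon (by rw [h, mul_zero])
          have h3 := abs_lt.mp (bumpFn_ne_zero hε0 h1)
          have h4 := abs_lt.mp (bumpFn_ne_zero hε0 h2)
          linarith [h3.1, h3.2, h4.1, h4.2]
        have hPQ : cfc (bumpFn ε M) T * cfc (bumpFn ε m) T = 0 := by
          rw [← cfc_mul _ _ T (bumpFn_cont ε M).continuousOn (bumpFn_cont ε m).continuousOn]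
          have : (fun x => bumpFn ε M x * bumpFn ε m x) = fun _ => (0 : ℝ) :=
            funext hprod
          rw [this, cfc_const 0 T, map_zero]
        have huw : ⟪u, w⟫_ℂ = 0 := by
          rw [← ha, ← hb, inner_T_symm' (cfc_predicate (bumpFn ε M) T)]
          have : cfc (bumpFn ε M) T ((cfc (bumpFn ε m) T) b)
              = (cfc (bumpFn ε M) T * cfc (bumpFn ε m) T) b := rfl
          rw [this, hPQ]
          simp
        obtain ⟨χ, hχ1, hχ2⟩ := var_lower' hT hε0 hu1 hw1 huw hTu hTw (by rw [← hd]; exact hε1)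
        have : Real.sqrt (observableVar T χ) ≤ maxDev T := le_ciSup hbdd ⟨χ, hχ1⟩
        rw [← hd] at hχ2
        linarith
    rw [hdiam]
    have : (M - m) / 2 = d := hd.symm
    rw [this]
    exact le_antisymm hub hlb
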